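/- arXiv:1812.02072 — 2 statements merged into one kernel-verified Lean document; each statement's English description precedes it below -/
import Mathlib

section
/- Define C_n = H_{n-1,1}^2 / H_{n-1,2} for integers n ≥ 2. For every integer n ≥ 2 with n ≠ 4, C_n/n < 121/196; equivalently, the function n ↦ C_n/n over integers n ≥ 2 attains its unique maximum at n = 4. -/
noncomputable def H (m j : ℕ) : ℝ := ∑ i ∈ Finset.Icc 1 m, (1 : ℝ) / (i : ℝ) ^ j

noncomputable def C (n : ℕ) : ℝ := (H (n - 1) 1) ^ 2 / H (n - 1) 2

lemma H_zero (j : ℕ) : H 0 j = 0 := by simp [H]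

lemma H_succ (m j : ℕ) : H (m + 1) j = H m j + 1 / ((m : ℝ) + 1) ^ j := by
  rw [H, Finset.sum_Icc_succ_top (by omega : 1 ≤ m + 1)]
  push_cast
  rfl

lemma H2_pos (m : ℕ) (h : 1 ≤ m) : 0 < H m 2 := by
  apply Finset.sum_pos
  · intro i hi
    simp only [Finset.mem_Icc] at hi
    have : (0:ℝ) < (i:ℝ) := by exact_mod_cast hi.1
    positivity
  · exact ⟨1, by simp [Finset.mem_Icc]; omega⟩

lemma H2_ge (m : ℕ) (h : 3 ≤ m) : 49 / 36 ≤ H m 2 := by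
  induction m, h using Nat.le_induction with
  | base => norm_num [H_succ, H_zero]
  | succ m hm ih =>
    rw [H_succ]
    have : 0 < 1 / ((m : ℝ) + 1) ^ 2 := by positivity
    linarith

lemma H1_le (m : ℕ) (h : 4 ≤ m) : H m 1 ≤ 121 / 288 * ((m : ℝ) + 1) := by
  induction m, h using Nat.le_induction with
  | base => norm_num [H_succ, H_zero]
  | succ m hm ih =>
    rw [H_succ]
    have hm4 : (4 : ℝ) ≤ (m : ℝ) := by exact_mod_cast hm
    have h1 : 1 / ((m : ℝ) + 1) ≤ 121 / 288 := by
      rw [div_le_iff₀ (by linarith)]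
      linarith
    push_cast
    rw [pow_one]
    linarith

lemma main_ineq (m : ℕ) (h : 4 ≤ m) :
    (H m 1) ^ 2 < 121 / 196 * ((m : ℝ) + 1) * H m 2 := by
  induction m, h using Nat.le_induction with
  | base => norm_num [H_succ, H_zero]
  | succ m hm ih =>
    have hm4 : (4 : ℝ) ≤ (m : ℝ) := by exact_mod_cast hm
    have hle := H1_le m hm
    have h2 := H2_ge m (by omega)
    set a : ℝ := 1 / ((m : ℝ) + 1) with ha
    have hapos : 0 < a := by positivity
    have hamul : a * ((m : ℝ) + 1) = 1 := by
      rw [ha]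
      have hne : ((m : ℝ) + 1) ≠ 0 := by positivity
      field_simp
    have e1 : 2 * H m 1 * a ≤ 121 / 144 := by
      have : 2 * H m 1 * a ≤ 2 * (121 / 288 * ((m : ℝ) + 1)) * a := by
        nlinarith
      nlinarith
    have e2 : (121 : ℝ) / 144 ≤ 121 / 196 * H m 2 := by linarith
    have e3 : a ^ 2 ≤ 121 / 196 * ((m : ℝ) + 2) * a ^ 2 := by
      nlinarith [sq_nonneg a]
    rw [H_succ, H_succ]
    push_cast
    have hpow : (1 : ℝ) / ((m : ℝ) + 1) ^ 1 = a := by rw [ha, pow_one]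
    have hpow2 : (1 : ℝ) / ((m : ℝ) + 1) ^ 2 = a ^ 2 := by
      rw [ha, div_pow, one_pow]
    rw [hpow, hpow2]
    nlinarith [ih]

theorem C_div_n_max_at_four (n : ℕ) (hn : 2 ≤ n) (hne : n ≠ 4) :
    C n / n < 121 / 196 := by
  match n, hn, hne with
  | 2, _, _ => norm_num [C, H_succ, H_zero]
  | 3, _, _ => norm_num [C, H_succ, H_zero]
  | (m + 5), _, _ =>
    have hm4 : 4 ≤ m + 4 := by omega
    have hmain := main_ineq (m + 4) hm4
    have h2 := H2_pos (m + 4) (by omega)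
    have hC : C (m + 5) = (H (m + 4) 1) ^ 2 / H (m + 4) 2 := rfl
    rw [hC, div_div, div_lt_iff₀ (by positivity)]
    push_cast at hmain ⊢
    nlinarith [hmain, h2]
end

section
/- If n is a positive multiple of 4, then among all partitions of n into parts ≥ 2, the partition consisting of n/4 parts equal to 4 maximizes ∑_i C_{n_i}, where C_j = H_{j-1,1}^2/H_{j-1,2}. -/
lemma key_large (m : ℕ) (hm : 26 ≤ m) :
    C (m + 1) ≤ 121 / 196 * (m + 1) := by
  have hm1 : (1:ℝ) ≤ m := by exact_mod_cast le_trans (by norm_num) hm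
  have hm0 : (0:ℝ) < m := by linarith
  -- H m 1 = harmonic m
  have hH1 : H m 1 = (harmonic m : ℝ) := by
    rw [H, harmonic_eq_sum_Icc]
    push_cast
    simp [one_div]
  have h1 : H m 1 ≤ 1 + Real.log m := hH1 ▸ harmonic_le_one_add_log m
  have hH1nn : 0 ≤ H m 1 := by
    rw [H]; positivity
  -- lower bound on H m 2
  have h2 : (8:ℝ)/5 ≤ H m 2 := by
    have hsub : Finset.Icc 1 26 ⊆ Finset.Icc 1 m := Finset.Icc_subset_Icc_right hm
    have := Finset.sum_le_sum_of_subset_of_nonneg hsub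
      (fun i _ _ => by positivity : ∀ i ∈ Finset.Icc 1 m, i ∉ Finset.Icc 1 26 → (0:ℝ) ≤ 1 / (i:ℝ)^2)
    refine le_trans ?_ this
    norm_num [Finset.sum_Icc_succ_top]
  have h2pos : (0:ℝ) < H m 2 := by linarith
  -- t = m^(1/8)
  set t : ℝ := (m:ℝ) ^ ((1:ℝ)/8) with htdef
  have htpos : 0 < t := Real.rpow_pos_of_pos hm0 _
  have htpow : t ^ (8:ℕ) = (m:ℝ) := by
    rw [htdef, ← Real.rpow_natCast (((m:ℝ)) ^ ((1:ℝ)/8)) 8, ← Real.rpow_mul (le_of_lt hm0)]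
    norm_num
  have ht : (3:ℝ)/2 ≤ t := by
    by_contra hc
    push_neg at hc
    have : t ^ (8:ℕ) < (3/2:ℝ) ^ (8:ℕ) := pow_lt_pow_left₀ hc (le_of_lt htpos) (by norm_num)
    rw [htpow] at this
    have : (m:ℝ) < 26 := by nlinarith
    have : (26:ℝ) ≤ m := by exact_mod_cast hm
    linarith
  have hlog : Real.log m ≤ 8 * (t - 1) := by
    have h8 : Real.log t = (1/8) * Real.log m := by
      rw [htdef, Real.log_rpow hm0]
    have := Real.log_le_sub_one_of_pos htpos
    rw [h8] at this
    linarith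
  have hlognn : 0 ≤ Real.log m := Real.log_nonneg hm1
  -- chain
  have hsq : H m 1 ^ 2 ≤ (8*t - 7)^2 := by
    have ha : H m 1 ≤ 8*t - 7 := by linarith
    nlinarith
  have hpoly : (8*t - 7)^2 ≤ 121/196 * ((m:ℝ) + 1) * (8/5) := by
    rw [← htpow]
    nlinarith [ht, pow_nonneg (by linarith : (0:ℝ) ≤ t - 3/2) 2,
      mul_nonneg (mul_nonneg (pow_nonneg (by linarith : (0:ℝ) ≤ t - 3/2) 2) (le_of_lt htpos)) (le_of_lt htpos),
      mul_nonneg (pow_nonneg (by linarith : (0:ℝ) ≤ t - 3/2) 3) (pow_nonneg (le_of_lt htpos) 5),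
      mul_nonneg (pow_nonneg (by linarith : (0:ℝ) ≤ t - 3/2) 2) (pow_nonneg (le_of_lt htpos) 6)]
  have : C (m + 1) = H m 1 ^ 2 / H m 2 := by rw [C]; norm_num
  have hC : C (m + 1) = H m 1 ^ 2 / H m 2 := by rw [C]; norm_num
  rw [hC, div_le_iff₀ h2pos]
  calc H m 1 ^ 2 ≤ (8*t - 7)^2 := hsq
    _ ≤ 121/196 * ((m:ℝ) + 1) * (8/5) := hpoly
    _ ≤ 121/196 * ((m:ℝ) + 1) * H m 2 := by
        apply mul_le_mul_of_nonneg_left h2 (by positivity)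

lemma key_small (j : ℕ) (hj : 2 ≤ j) (hj' : j ≤ 26) : C j ≤ 121 / 196 * j := by
  interval_cases j <;>
  norm_num [C, H, Finset.sum_Icc_succ_top]

lemma key (j : ℕ) (hj : 2 ≤ j) : C j ≤ 121 / 196 * j := by
  rcases le_or_gt j 26 with h | h
  · exact key_small j hj h
  · obtain ⟨m, rfl⟩ : ∃ m, j = m + 1 := ⟨j - 1, by omega⟩
    have : (26:ℕ) ≤ m := by omega
    have := key_large m this
    calc C (m+1) ≤ 121/196 * ((m:ℝ) + 1) := this
      _ = 121/196 * ((m+1 : ℕ):ℝ) := by push_cast; ring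

theorem rule_of_fours_multiple (n : ℕ) (hn : 0 < n) (h4 : 4 ∣ n)
    (l : Multiset ℕ) (hl : ∀ x ∈ l, 2 ≤ x) (hsum : l.sum = n) :
    (l.map C).sum ≤ ((Multiset.replicate (n / 4) 4).map C).sum := by
  have hC4 : C 4 = 121/49 := by norm_num [C, H, Finset.sum_Icc_succ_top]
  have hbound : ∀ (s : Multiset ℕ), (∀ x ∈ s, 2 ≤ x) →
      (s.map C).sum ≤ 121/196 * (s.sum : ℝ) := by
    intro s
    induction s using Multiset.induction with
    | empty => simp
    | cons a s ih =>
      intro hs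
      have ha : 2 ≤ a := hs a (Multiset.mem_cons_self a s)
      have h1 := key a ha
      have h2 := ih (fun x hx => hs x (Multiset.mem_cons_of_mem hx))
      simp only [Multiset.map_cons, Multiset.sum_cons, Nat.cast_add]
      linarith
  have h1 := hbound l hl
  rw [hsum] at h1
  have hRHS : ((Multiset.replicate (n / 4) 4).map C).sum = (n/4 : ℕ) * (121/49) := by
    rw [Multiset.map_replicate, Multiset.sum_replicate, hC4, nsmul_eq_mul]
  rw [hRHS]
  obtain ⟨k, rfl⟩ := h4
  have hk : (4 * k) / 4 = k := by omega
  rw [hk]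
  push_cast
  calc (l.map C).sum ≤ 121/196 * ((4 * k : ℕ) : ℝ) := h1
    _ = (k:ℝ) * (121/49) := by push_cast; ring
end
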